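/- arXiv:quant-ph/0608161 — 2 statements merged into one kernel-verified Lean document; each statement's English description precedes it below -/
import Mathlib

section
/- (Fejér–Riesz theorem) A Laurent polynomial Q(z) = \sum_{i=-D}^{D} q_i z^i is real-valued and nonnegative on the unit circle |z|=1 if and only if there exists a polynomial P(z) = \sum_{i=0}^{D} p_i z^i of degree at most D such that Q(z) = P(z) * conj(P(1/conj(z))) for all nonzero z. -/
open Polynomial Finset Complex

private noncomputable def fr_tw (N : ℕ) (p : Polynomial ℂ) : Polynomial ℂ :=
  ∑ i ∈ Finset.range (N+1), Polynomial.C ((starRingEnd ℂ) (p.coeff (N - i))) * Polynomial.X ^ i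

private lemma fr_tw_coeff (N : ℕ) (p : Polynomial ℂ) {j : ℕ} (hj : j ≤ N) :
    (fr_tw N p).coeff j = (starRingEnd ℂ) (p.coeff (N - j)) := by
  rw [fr_tw, Polynomial.finset_sum_coeff]
  rw [Finset.sum_eq_single j]
  · simp
  · intro b _ hb
    simp [Polynomial.coeff_C_mul, Polynomial.coeff_X_pow, hb, Ne.symm hb]
  · intro h; exact absurd (Finset.mem_range.2 (Nat.lt_succ_of_le hj)) h

private lemma fr_tw_natDegree_le (N : ℕ) (p : Polynomial ℂ) : (fr_tw N p).natDegree ≤ N := by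
  refine Polynomial.natDegree_sum_le_of_forall_le _ _ (fun i hi => ?_)
  refine le_trans (Polynomial.natDegree_C_mul_le _ _) ?_
  simpa using Nat.lt_succ_iff.mp (Finset.mem_range.mp hi)

private lemma fr_eval_conj (p : Polynomial ℂ) (x : ℂ) :
    (p.map (starRingEnd ℂ)).eval x = (starRingEnd ℂ) (p.eval ((starRingEnd ℂ) x)) := by
  have := Polynomial.eval₂_hom (starRingEnd ℂ) ((starRingEnd ℂ) x) (p := p)
  rw [Polynomial.eval_map]
  simpa using this

private lemma fr_tw_eval (N : ℕ) (p : Polynomial ℂ) (hp : p.natDegree ≤ N) {z : ℂ} (hz : z ≠ 0) :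
    (fr_tw N p).eval z = z ^ N * (p.map (starRingEnd ℂ)).eval z⁻¹ := by
  have hmd : (p.map (starRingEnd ℂ)).natDegree ≤ N := le_trans (Polynomial.natDegree_map_le) hp
  rw [Polynomial.eval_eq_sum_range' (Nat.lt_succ_of_le hmd) z⁻¹]
  rw [fr_tw]
  rw [Polynomial.eval_finset_sum]
  simp only [Polynomial.eval_mul, Polynomial.eval_C, Polynomial.eval_pow, Polynomial.eval_X]
  rw [Finset.mul_sum]
  rw [← Finset.sum_range_reflect]
  refine Finset.sum_congr rfl (fun i hi => ?_)
  have hiN : i ≤ N := Nat.lt_succ_iff.mp (Finset.mem_range.mp hi)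
  have h2 : N + 1 - 1 - i = N - i := by omega
  have h1 : N - (N - i) = i := Nat.sub_sub_self hiN
  rw [Polynomial.coeff_map, h2, h1]
  have h3 : z ^ N * z⁻¹ ^ i = z ^ (N - i) := by
    rw [inv_pow, ← div_eq_mul_inv, pow_sub₀ _ hz hiN]; ring
  rw [show z ^ N * ((starRingEnd ℂ) (p.coeff i) * z⁻¹ ^ i)
      = (starRingEnd ℂ) (p.coeff i) * (z ^ N * z⁻¹ ^ i) by ring, h3]

private lemma fr_circle_infinite : Set.Infinite {z : ℂ | ‖z‖ = 1} := by
  have hinj : Set.InjOn (fun t : ℝ => Complex.exp (t * Complex.I)) (Set.Ioo 0 1) := by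
    intro s hs t ht hst
    have h1 : Real.cos s = Real.cos t := by
      have := congrArg Complex.re hst
      simpa [Complex.exp_ofReal_mul_I_re] using this
    have hsub : Set.Ioo (0:ℝ) 1 ⊆ Set.Icc 0 Real.pi := by
      intro x hx
      exact ⟨le_of_lt hx.1, le_trans (le_of_lt hx.2) (by linarith [Real.pi_gt_three])⟩
    exact Real.strictAntiOn_cos.injOn (hsub hs) (hsub ht) h1
  have him : Set.Infinite ((fun t : ℝ => Complex.exp (t * Complex.I)) '' (Set.Ioo 0 1)) :=
    Set.Infinite.image hinj (Set.Ioo_infinite (by norm_num))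
  refine him.mono ?_
  rintro z ⟨t, _, rfl⟩
  simp [Complex.norm_exp_ofReal_mul_I]

private lemma fr_ne_zero_infinite : Set.Infinite {z : ℂ | z ≠ 0} := by
  have : ({z : ℂ | z ≠ 0})ᶜ = {0} := by ext z; simp
  exact Set.infinite_of_finite_compl (by rw [this]; exact Set.finite_singleton 0)

private lemma fr_halve {α : Type*} [DecidableEq α] (ι : α → α) (hι : ∀ a, ι (ι a) = a) :
    ∀ (n : ℕ) (M : Multiset α), Multiset.card M = n →
    (∀ a, M.count (ι a) = M.count a) →
    (∀ a, ι a = a → Even (M.count a)) →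
    ∃ S : Multiset α, M = S + Multiset.map ι S := by
  intro n
  induction n using Nat.strong_induction_on with
  | _ n IH =>
    intro M hcard hsym hfix
    rcases Multiset.empty_or_exists_mem M with hM | ⟨a, ha⟩
    · exact ⟨0, by simp [hM]⟩
    have e1 : ∀ b, (ι b = a) ↔ (b = ι a) :=
      fun b => ⟨fun h => by rw [← h, hι], fun h => by rw [h, hι]⟩
    have e2 : ∀ b, (ι b = ι a) ↔ (b = a) :=
      fun b => ⟨fun h => by rw [← hι b, h, hι], fun h => by rw [h]⟩
    by_cases hfa : ι a = a
    · have h1 : 1 ≤ M.count a := Multiset.one_le_count_iff_mem.2 ha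
      have he : Even (M.count a) := hfix a hfa
      have h2 : 2 ≤ M.count a := by rcases he with ⟨k, hk⟩; omega
      set M' := (M.erase a).erase a with hM'
      have haM1 : a ∈ M.erase a := by
        rw [← Multiset.count_pos, Multiset.count_erase_self]; omega
      have hMeq : M = a ::ₘ a ::ₘ M' := by
        rw [hM', Multiset.cons_erase haM1, Multiset.cons_erase ha]
      have hcnt : ∀ b, M'.count b = M.count b - (if b = a then 2 else 0) := by
        intro b
        by_cases hb : b = a
        · subst hb
          rw [hM', Multiset.count_erase_self, Multiset.count_erase_self, if_pos rfl]
          omega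
        · rw [hM', Multiset.count_erase_of_ne hb, Multiset.count_erase_of_ne hb, if_neg hb]
          omega
      have hcard' : Multiset.card M' = n - 2 := by
        have := congrArg Multiset.card hMeq
        simp at this; omega
      have hn2 : 2 ≤ n := by
        have := Multiset.count_le_card a M; omega
      obtain ⟨S', hS'⟩ := IH (n - 2) (by omega) M' hcard'
        (fun b => by
          rw [hcnt, hcnt, hsym b]
          by_cases hb : b = a
          · subst hb; rw [hfa]
          · rw [if_neg hb, if_neg (fun h => hb (((e1 b).1 h).trans hfa))])
        (fun b hfb => by
          rw [hcnt]
          by_cases hb : b = a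
          · subst hb
            rw [if_pos rfl]
            rcases he with ⟨k, hk⟩
            exact ⟨k - 1, by omega⟩
          · rw [if_neg hb, Nat.sub_zero]; exact hfix b hfb)
      refine ⟨a ::ₘ S', ?_⟩
      rw [hMeq, hS']
      simp only [Multiset.map_cons, hfa]
      rw [Multiset.cons_add, Multiset.add_cons]
    · have h1 : 1 ≤ M.count a := Multiset.one_le_count_iff_mem.2 ha
      have hia : ι a ∈ M := by rw [← Multiset.count_pos, hsym]; omega
      have hiae : ι a ∈ M.erase a := by
        rw [← Multiset.count_pos, Multiset.count_erase_of_ne hfa, hsym]; omega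
      set M' := (M.erase a).erase (ι a) with hM'
      have hMeq : M = a ::ₘ ι a ::ₘ M' := by
        rw [hM', Multiset.cons_erase hiae, Multiset.cons_erase ha]
      have hcnt : ∀ b, M'.count b = M.count b - (if b = a then 1 else 0)
          - (if b = ι a then 1 else 0) := by
        intro b
        by_cases hb : b = a
        · subst hb
          rw [hM', Multiset.count_erase_of_ne (Ne.symm hfa), Multiset.count_erase_self,
            if_pos rfl, if_neg (fun h => hfa h.symm)]
          omega
        · by_cases hb2 : b = ι a
          · subst hb2
            rw [hM', Multiset.count_erase_self, Multiset.count_erase_of_ne hfa,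
              if_neg hb, if_pos rfl]
            omega
          · rw [hM', Multiset.count_erase_of_ne hb2, Multiset.count_erase_of_ne hb,
              if_neg hb, if_neg hb2]
            omega
      have hcard' : Multiset.card M' = n - 2 := by
        have := congrArg Multiset.card hMeq
        simp at this; omega
      have hn2 : 2 ≤ n := by
        have := congrArg Multiset.card hMeq
        simp at this; omega
      obtain ⟨S', hS'⟩ := IH (n - 2) (by omega) M' hcard'
        (fun b => by
          rw [hcnt (ι b), hcnt b, hsym b]
          by_cases hb : b = a
          · subst hb
            rw [if_neg hfa, if_pos rfl, if_pos rfl, if_neg (fun h => hfa h.symm)]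
            omega
          · by_cases hb2 : b = ι a
            · subst hb2
              rw [if_pos (hι a), if_neg (fun h => hfa ((e2 (ι a)).1 h)),
                if_neg hfa, if_pos rfl]
              omega
            · rw [if_neg (fun h => hb2 ((e1 b).1 h)), if_neg (fun h => hb ((e2 b).1 h)),
                if_neg hb, if_neg hb2])
        (fun b hfb => by
          have hba : b ≠ a := fun h => hfa (h ▸ hfb)
          have hbia : b ≠ ι a := fun h => hba (by rw [← hfb, h, hι])
          rw [hcnt, if_neg hba, if_neg hbia]
          simpa using hfix b hfb)
      refine ⟨a ::ₘ S', ?_⟩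
      rw [hMeq, hS']
      simp only [Multiset.map_cons]
      rw [Multiset.cons_add, Multiset.add_cons]

private lemma fr_symm_dvd (f : Polynomial ℂ) (hf : f ≠ 0) (N : ℕ) (hfd : f.natDegree ≤ N)
    (hsym : f = fr_tw N f) (a : ℂ) (ha : a ≠ 0) (j : ℕ) (hj : (X - C a) ^ j ∣ f) :
    (X - Polynomial.C (((starRingEnd ℂ) a)⁻¹)) ^ j ∣ f := by
  obtain ⟨u, hu⟩ := hj
  have hXa : (X - Polynomial.C a) ^ j ≠ 0 := pow_ne_zero _ (Polynomial.X_sub_C_ne_zero a)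
  have hu0 : u ≠ 0 := fun h => hf (by rw [hu, h, mul_zero])
  have hdeg : j + u.natDegree = f.natDegree := by
    rw [hu, Polynomial.natDegree_mul hXa hu0, Polynomial.natDegree_pow,
      Polynomial.natDegree_X_sub_C, mul_one]
  have hud : u.natDegree ≤ N - j := by omega
  have hjN : j ≤ N := by omega
  have hca : (starRingEnd ℂ) a ≠ 0 := by
    simpa using ha
  have key : fr_tw N f
      = (1 - Polynomial.C ((starRingEnd ℂ) a) * X) ^ j * fr_tw (N - j) u := by
    apply Polynomial.eq_of_infinite_eval_eq
    refine fr_ne_zero_infinite.mono (fun z hz => ?_)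
    have hz : z ≠ 0 := hz
    rw [Set.mem_setOf_eq, fr_tw_eval N f hfd hz, Polynomial.eval_mul,
      fr_tw_eval (N - j) u hud hz]
    rw [hu, Polynomial.map_mul, Polynomial.map_pow, Polynomial.map_sub,
      Polynomial.map_X, Polynomial.map_C]
    rw [Polynomial.eval_mul, Polynomial.eval_pow, Polynomial.eval_sub,
      Polynomial.eval_X, Polynomial.eval_C]
    rw [Polynomial.eval_pow, Polynomial.eval_sub, Polynomial.eval_one,
      Polynomial.eval_mul, Polynomial.eval_C, Polynomial.eval_X]
    have hNsplit : z ^ N = z ^ j * z ^ (N - j) := by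
      rw [← pow_add]; congr 1; omega
    rw [hNsplit]
    have hzj : z ^ j * (z⁻¹ - (starRingEnd ℂ) a) ^ j
        = (1 - (starRingEnd ℂ) a * z) ^ j := by
      rw [← mul_pow]; congr 1
      field_simp
    calc z ^ j * z ^ (N - j) * ((z⁻¹ - (starRingEnd ℂ) a) ^ j *
            (Polynomial.map (starRingEnd ℂ) u).eval z⁻¹)
        = (z ^ j * (z⁻¹ - (starRingEnd ℂ) a) ^ j) *
            (z ^ (N - j) * (Polynomial.map (starRingEnd ℂ) u).eval z⁻¹) := by ring
      _ = _ := by rw [hzj]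
  have hfact : (1 - Polynomial.C ((starRingEnd ℂ) a) * X)
      = Polynomial.C (-(starRingEnd ℂ) a) * (X - Polynomial.C (((starRingEnd ℂ) a)⁻¹)) := by
    rw [mul_sub, ← Polynomial.C_mul, neg_mul, mul_inv_cancel₀ hca]
    simp; ring
  refine Dvd.intro (Polynomial.C ((-(starRingEnd ℂ) a) ^ j) * fr_tw (N - j) u) ?_
  rw [hsym, key, hfact, mul_pow, ← Polynomial.C_pow]
  ring

private lemma fr_even (f : Polynomial ℂ) (hf : f ≠ 0) (D : ℕ)
    (hQ : ∀ z : ℂ, ‖z‖ = 1 →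
      (((z ^ D)⁻¹ : ℂ) * f.eval z).im = 0 ∧ 0 ≤ (((z ^ D)⁻¹ : ℂ) * f.eval z).re)
    (w : ℂ) (hw : ‖w‖ = 1) : Even (Polynomial.rootMultiplicity w f) := by
  by_contra hodd
  rw [Nat.not_even_iff_odd] at hodd
  set m := Polynomial.rootMultiplicity w f with hm
  set g := f /ₘ (X - Polynomial.C w) ^ m with hg
  have hfac : (X - Polynomial.C w) ^ m * g = f :=
    Polynomial.pow_mul_divByMonic_rootMultiplicity_eq f w
  have hgw : g.eval w ≠ 0 := Polynomial.eval_divByMonic_pow_rootMultiplicity_ne_zero w hf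
  have hw0 : w ≠ 0 := fun h => by simp [h] at hw
  obtain ⟨E, hE⟩ : ∃ E : ℝ → ℂ, E = fun t : ℝ => w * Complex.exp ((t:ℂ) * Complex.I) := ⟨_, rfl⟩
  have hEabs : ∀ t, ‖(E t)‖ = 1 := by
    intro t; simp [hE, map_mul, hw, Complex.norm_exp_ofReal_mul_I]
  have hE0 : ∀ t, E t ≠ 0 := fun t h => by
    have := hEabs t; rw [h] at this; simp at this
  have hEcont : Continuous E := by
    rw [hE]
    exact continuous_const.mul (Complex.continuous_exp.comp (Complex.continuous_ofReal.mul
      continuous_const))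
  have hE00 : E 0 = w := by simp [hE]
  obtain ⟨F, hF⟩ : ∃ F : ℝ → ℂ, F = fun t => ((E t ^ D)⁻¹) * f.eval (E t) := ⟨_, rfl⟩
  have hFim : ∀ t, (F t).im = 0 := by
    intro t; simp only [hF]; exact (hQ (E t) (hEabs t)).1
  have hFre : ∀ t, 0 ≤ (F t).re := by
    intro t; simp only [hF]; exact (hQ (E t) (hEabs t)).2
  obtain ⟨G, hG⟩ : ∃ G : ℝ → ℂ, G = fun t => ((E t ^ D)⁻¹) * w ^ m * g.eval (E t) := ⟨_, rfl⟩
  obtain ⟨s, hs⟩ : ∃ s : ℝ → ℂ, s = fun t : ℝ => (Complex.exp ((t:ℂ) * Complex.I) - 1) / (t : ℂ) :=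
    ⟨_, rfl⟩
  have hFTs : ∀ t : ℝ, t ≠ 0 → F t = (t:ℂ)^m * ((s t)^m * G t) := by
    intro t ht
    have htC : (t:ℂ) ≠ 0 := by exact_mod_cast ht
    have h1 : E t - w = w * (Complex.exp (t * Complex.I) - 1) := by simp only [hE]; ring
    have h2 : (t:ℂ) * s t = Complex.exp (t * Complex.I) - 1 := by
      simp only [hs]; field_simp
    calc F t = ((E t ^ D)⁻¹) * ((E t - w) ^ m * g.eval (E t)) := by
          simp only [hF]
          conv_lhs => rw [← hfac]
          simp only [Polynomial.eval_mul, Polynomial.eval_pow, Polynomial.eval_sub,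
            Polynomial.eval_X, Polynomial.eval_C]
      _ = ((E t ^ D)⁻¹) * ((w * (Complex.exp (t * Complex.I) - 1)) ^ m * g.eval (E t)) := by
          rw [h1]
      _ = ((E t ^ D)⁻¹) * ((w * ((t:ℂ) * s t)) ^ m * g.eval (E t)) := by rw [h2]
      _ = (t:ℂ)^m * ((s t)^m * (((E t ^ D)⁻¹) * w ^ m * g.eval (E t))) := by ring
      _ = (t:ℂ)^m * ((s t)^m * G t) := by simp only [hG]
  have hG0 : G 0 = (w ^ D)⁻¹ * w ^ m * g.eval w := by simp only [hG]; rw [hE00]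
  have hGcont : ContinuousAt G 0 := by
    rw [hG]
    refine ContinuousAt.mul (ContinuousAt.mul ?_ continuousAt_const) ?_
    · refine ContinuousAt.inv₀ ((hEcont.pow D).continuousAt) ?_
      rw [hE00]; exact pow_ne_zero _ hw0
    · exact (g.continuous.comp hEcont).continuousAt
  have hslope : Filter.Tendsto s (nhdsWithin 0 {0}ᶜ) (nhds Complex.I) := by
    have hd : HasDerivAt (fun t : ℝ => Complex.exp (t * Complex.I)) Complex.I 0 := by
      have h1 : HasDerivAt (fun z : ℂ => Complex.exp (z * Complex.I)) Complex.I 0 := by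
        simpa using ((hasDerivAt_id (0:ℂ)).mul_const Complex.I).cexp
      simpa using h1.comp_ofReal
    have h2 := hasDerivAt_iff_tendsto_slope.mp hd
    refine h2.congr (fun t => ?_)
    rw [slope_def_module]
    simp [hs, Complex.real_smul, div_eq_inv_mul]
  set c := Complex.I ^ m * G 0 with hc
  have hc0 : c ≠ 0 := by
    rw [hc, hG0]
    exact mul_ne_zero (pow_ne_zero _ Complex.I_ne_zero)
      (mul_ne_zero (mul_ne_zero (inv_ne_zero (pow_ne_zero _ hw0)) (pow_ne_zero _ hw0)) hgw)
  have hT : Filter.Tendsto (fun t => (s t)^m * G t) (nhdsWithin 0 {0}ᶜ) (nhds c) :=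
    (hslope.pow m).mul (hGcont.tendsto.mono_left nhdsWithin_le_nhds)
  have hTim := (Complex.continuous_im.tendsto c).comp hT
  have hTre := (Complex.continuous_re.tendsto c).comp hT
  have hTval : ∀ t : ℝ, t ≠ 0 → (s t)^m * G t = (((F t).re / t^m : ℝ) : ℂ) := by
    intro t ht
    have htC : (t:ℂ) ≠ 0 := by exact_mod_cast ht
    have h1 : F t = ((F t).re : ℂ) := Complex.ext rfl (by simp [hFim t])
    have h2 := hFTs t ht
    rw [h1] at h2
    push_cast
    rw [eq_div_iff (pow_ne_zero m htC)]
    rw [h2]; ring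
  have hcim : c.im = 0 := by
    have h2 : (Complex.im ∘ fun t : ℝ => (s t)^m * G t) =ᶠ[nhdsWithin (0:ℝ) {0}ᶜ]
        (fun _ => 0) := by
      filter_upwards [self_mem_nhdsWithin] with t ht
      simp only [Function.comp_apply]
      rw [hTval t ht, Complex.ofReal_im]
    exact tendsto_nhds_unique (hTim.congr' h2) tendsto_const_nhds
  have hpos : 0 ≤ c.re := by
    have hsub : nhdsWithin (0:ℝ) (Set.Ioi 0) ≤ nhdsWithin 0 {0}ᶜ :=
      nhdsWithin_mono 0 (fun t ht => ne_of_gt ht)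
    refine ge_of_tendsto (hTre.mono_left hsub) ?_
    filter_upwards [self_mem_nhdsWithin] with t ht
    simp only [Function.comp_apply]
    rw [hTval t (ne_of_gt ht), Complex.ofReal_re]
    exact div_nonneg (hFre t) (pow_nonneg (le_of_lt ht) m)
  have hneg : c.re ≤ 0 := by
    have hsub : nhdsWithin (0:ℝ) (Set.Iio 0) ≤ nhdsWithin 0 {0}ᶜ :=
      nhdsWithin_mono 0 (fun t ht => ne_of_lt ht)
    refine le_of_tendsto (hTre.mono_left hsub) ?_
    filter_upwards [self_mem_nhdsWithin] with t ht
    simp only [Function.comp_apply]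
    rw [hTval t (ne_of_lt ht), Complex.ofReal_re]
    exact div_nonpos_of_nonneg_of_nonpos (hFre t) (le_of_lt (hodd.pow_neg ht))
  exact hc0 (Complex.ext (le_antisymm hneg hpos) hcim)

private noncomputable def fr_poly (D : ℕ) (q : ℤ → ℂ) : Polynomial ℂ :=
  ∑ j ∈ Finset.range (2*D+1), Polynomial.C (q ((j:ℤ) - (D:ℤ))) * Polynomial.X ^ j

private lemma fr_poly_deg (D : ℕ) (q : ℤ → ℂ) : (fr_poly D q).natDegree ≤ 2*D := by
  refine Polynomial.natDegree_sum_le_of_forall_le _ _ (fun j hj => ?_)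
  refine le_trans (Polynomial.natDegree_C_mul_le _ _) ?_
  simpa using Nat.lt_succ_iff.mp (Finset.mem_range.mp hj)

private lemma fr_laurent (D : ℕ) (q : ℤ → ℂ) {z : ℂ} (hz : z ≠ 0) :
    ∑ i ∈ Finset.Icc (-(D:ℤ)) (D:ℤ), q i * z ^ i = ((z^D)⁻¹ : ℂ) * (fr_poly D q).eval z := by
  rw [fr_poly, Polynomial.eval_finset_sum, Finset.mul_sum]
  refine Finset.sum_nbij' (fun i => (i + D).toNat) (fun j => (j:ℤ) - D) ?_ ?_ ?_ ?_ ?_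
  · intro i hi; simp only [Finset.mem_Icc] at hi; simp only [Finset.mem_range]; omega
  · intro j hj; simp only [Finset.mem_range] at hj; simp only [Finset.mem_Icc]; omega
  · intro i hi; simp only [Finset.mem_Icc] at hi
    show ((i + (D:ℤ)).toNat : ℤ) - D = i
    omega
  · intro j hj; simp only [Finset.mem_range] at hj
    show (((j:ℤ) - D) + D).toNat = j
    omega
  · intro i hi
    simp only [Finset.mem_Icc] at hi
    have h1 : (((i + D).toNat : ℤ)) = i + D := Int.toNat_of_nonneg (by omega)
    simp only [Polynomial.eval_mul, Polynomial.eval_C, Polynomial.eval_pow, Polynomial.eval_X]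
    rw [show ((((i + D).toNat : ℤ)) - (D:ℤ)) = i by omega]
    have h3 : z ^ ((i + D).toNat) = z ^ (i + (D:ℤ)) := by rw [← zpow_natCast, h1]
    rw [h3, zpow_add₀ hz]
    have h4 : z ^ (D:ℤ) = z ^ D := zpow_natCast z D
    rw [h4]
    field_simp

private lemma fr_conj_circle {z : ℂ} (hz : ‖z‖ = 1) : (starRingEnd ℂ) z = z⁻¹ := by
  have hz0 : z ≠ 0 := fun h => by simp [h] at hz
  have h1 : z * (starRingEnd ℂ) z = 1 := by
    rw [Complex.mul_conj]
    norm_cast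
    rw [Complex.normSq_eq_norm_sq, hz]; norm_num
  field_simp
  linear_combination h1

/-- Fejér–Riesz theorem: a Laurent polynomial of degree `D` is real-valued and
nonnegative on the unit circle iff it factors as `P(z) * conj (P (1/conj z))`
for some polynomial `P` of degree at most `D`. -/
theorem stmt_5 (D : ℕ) (q : ℤ → ℂ) :
    (∀ z : ℂ, ‖z‖ = 1 →
      (∑ i ∈ Finset.Icc (-(D:ℤ)) (D:ℤ), q i * z ^ i).im = 0 ∧
      0 ≤ (∑ i ∈ Finset.Icc (-(D:ℤ)) (D:ℤ), q i * z ^ i).re) ↔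
    (∃ p : ℕ → ℂ, ∀ z : ℂ, z ≠ 0 →
      (∑ i ∈ Finset.Icc (-(D:ℤ)) (D:ℤ), q i * z ^ i)
        = (∑ i ∈ Finset.range (D + 1), p i * z ^ i) *
          (starRingEnd ℂ) (∑ i ∈ Finset.range (D + 1),
            p i * (((starRingEnd ℂ) z)⁻¹) ^ i)) := by
  constructor
  · intro hQ
    classical
    by_cases hf0 : fr_poly D q = 0
    · refine ⟨fun _ => 0, fun z hz => ?_⟩
      rw [fr_laurent D q hz, hf0]
      simp
    set f := fr_poly D q with hfdef
    have hfne : f ≠ 0 := hf0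
    have hfdeg : f.natDegree ≤ 2*D := fr_poly_deg D q
    have hQp : ∀ z : ℂ, ‖z‖ = 1 →
        (((z^D)⁻¹ : ℂ) * f.eval z).im = 0 ∧ 0 ≤ (((z^D)⁻¹ : ℂ) * f.eval z).re := by
      intro z hz1
      have hz0 : z ≠ 0 := fun h => by simp [h] at hz1
      have := hQ z hz1
      rwa [fr_laurent D q hz0] at this
    -- symmetry of f
    have hsym : f = fr_tw (2*D) f := by
      apply Polynomial.eq_of_infinite_eval_eq
      refine fr_circle_infinite.mono (fun z hz1 => ?_)
      have hz1 : ‖z‖ = 1 := hz1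
      have hz0 : z ≠ 0 := fun h => by simp [h] at hz1
      rw [Set.mem_setOf_eq, fr_tw_eval (2*D) _ hfdeg hz0]
      have hcz : (starRingEnd ℂ) z = z⁻¹ := fr_conj_circle hz1
      rw [← hcz, fr_eval_conj, Complex.conj_conj]
      set L := ((z^D)⁻¹ : ℂ) * f.eval z with hL
      have hfz : f.eval z = z^D * L := by
        rw [hL, ← mul_assoc, mul_inv_cancel₀ (pow_ne_zero _ hz0), one_mul]
      have hLreal : (starRingEnd ℂ) L = L :=
        Complex.conj_eq_iff_im.mpr (hQp z hz1).1
      rw [hfz, map_mul, map_pow, hLreal, hcz]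
      have hzz : z^(2*D) * (z⁻¹)^D = z^D := by
        rw [inv_pow, two_mul, pow_add, mul_assoc, mul_inv_cancel₀ (pow_ne_zero _ hz0), mul_one]
      calc z^D * L = z^(2*D) * (z⁻¹)^D * L := by rw [hzz]
        _ = z^(2*D) * ((z⁻¹)^D * L) := by ring
    have heven : ∀ w : ℂ, ‖w‖ = 1 → Even (Polynomial.rootMultiplicity w f) :=
      fr_even f hfne D hQp
    -- roots
    have hsplits : f.Splits := IsAlgClosed.splits f
    have hcard : Multiset.card f.roots = f.natDegree := Polynomial.splits_iff_card_roots.mp hsplits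
    have hfeq : f = Polynomial.C f.leadingCoeff * (f.roots.map (fun a => X - Polynomial.C a)).prod :=
      hsplits.eq_prod_roots
    set n := f.natDegree with hn
    set k := 2*D - n with hk
    have hlc : f.coeff n ≠ 0 := by
      rw [hn, Polynomial.coeff_natDegree]
      exact Polynomial.leadingCoeff_ne_zero.mpr hfne
    have hcoeffs : ∀ j, j ≤ 2*D → f.coeff j = (starRingEnd ℂ) (f.coeff (2*D - j)) := by
      intro j hj
      conv_lhs => rw [hsym]
      rw [fr_tw_coeff _ _ hj]
    have hm0a : ∀ d, d < k → f.coeff d = 0 := by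
      intro d hd
      rw [hcoeffs d (by omega), Polynomial.coeff_eq_zero_of_natDegree_lt (by omega)]
      simp
    have hm0b : f.coeff k ≠ 0 := by
      rw [hcoeffs _ (by omega), show 2*D - k = n by omega]
      simpa using hlc
    have hm0 : Polynomial.rootMultiplicity 0 f = k := by
      have h1 : (X - Polynomial.C (0:ℂ)) = (X : Polynomial ℂ) := by simp
      have hd1 : k ≤ Polynomial.rootMultiplicity 0 f := by
        rw [Polynomial.le_rootMultiplicity_iff hfne, h1, Polynomial.X_pow_dvd_iff]
        exact hm0a
      have hd2 : ¬ (k + 1 ≤ Polynomial.rootMultiplicity 0 f) := by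
        rw [Polynomial.le_rootMultiplicity_iff hfne, h1, Polynomial.X_pow_dvd_iff]
        intro h
        exact hm0b (h _ (by omega))
      omega
    set ι : ℂ → ℂ := fun a => ((starRingEnd ℂ) a)⁻¹ with hιdef
    have hι2 : ∀ a, ι (ι a) = a := by intro a; simp [hιdef]
    set M := f.roots.filter (fun a => a ≠ 0) with hMdef
    have hcount : ∀ a : ℂ, a ≠ 0 → M.count a = Polynomial.rootMultiplicity a f := by
      intro a ha
      rw [hMdef, Multiset.count_filter, if_pos ha, Polynomial.count_roots]
    have hrm : ∀ a : ℂ, a ≠ 0 →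
        Polynomial.rootMultiplicity a f ≤ Polynomial.rootMultiplicity (ι a) f := by
      intro a ha
      rw [Polynomial.le_rootMultiplicity_iff hfne]
      exact fr_symm_dvd f hfne (2*D) hfdeg hsym a ha _ (Polynomial.pow_rootMultiplicity_dvd f a)
    have hMsym : ∀ a, M.count (ι a) = M.count a := by
      intro a
      by_cases ha : a = 0
      · subst ha
        have : ι 0 = 0 := by simp [hιdef]
        rw [this]
      · have hia : ι a ≠ 0 := by
          rw [hιdef]
          exact inv_ne_zero (by simpa using ha)
        rw [hcount _ hia, hcount _ ha]
        have h1 := hrm a ha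
        have h2 := hrm (ι a) hia
        rw [hι2 a] at h2
        omega
    have hMfix : ∀ a, ι a = a → Even (M.count a) := by
      intro a hfix
      by_cases ha : a = 0
      · subst ha
        rw [hMdef, Multiset.count_filter]
        simp
      · have hca : (starRingEnd ℂ) a ≠ 0 := by simpa using ha
        have h1 : (starRingEnd ℂ) a * a = 1 := by
          have h0 := congrArg (fun x => (starRingEnd ℂ) a * x) hfix
          simp only [hιdef] at h0
          rw [← h0, mul_inv_cancel₀ hca]
        have habs : ‖a‖ = 1 := by
          have h2 := congrArg (fun x : ℂ => ‖x‖) h1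
          simp only [norm_mul, Complex.norm_conj, norm_one] at h2
          have h3 := norm_nonneg a
          nlinarith
        rw [hcount a ha]
        exact heven a habs
    obtain ⟨S, hS⟩ := fr_halve ι hι2 (Multiset.card M) M rfl hMsym hMfix
    have hdecomp : f.roots = Multiset.replicate k 0 + M := by
      rw [Multiset.ext]
      intro a
      by_cases ha : a = 0
      · subst ha
        rw [Multiset.count_add, Multiset.count_replicate, if_pos rfl, hMdef,
          Multiset.count_filter]
        simp [Polynomial.count_roots, hm0]
      · rw [Multiset.count_add, Multiset.count_replicate, hMdef, Multiset.count_filter,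
          if_pos ha, if_neg (fun h => ha h.symm)]
        omega
    set ν := Multiset.card S with hν
    have hcards : n = k + 2*ν := by
      have h1 := congrArg Multiset.card hdecomp
      rw [hcard] at h1
      rw [Multiset.card_add, Multiset.card_replicate] at h1
      have h2 := congrArg Multiset.card hS
      rw [Multiset.card_add, Multiset.card_map] at h2
      omega
    have hn2D : n ≤ 2*D := hfdeg
    have hkn : k = 2*D - n := hk
    have hnD : D ≤ n ∧ ν = n - D ∧ k + ν = D := by
      constructor
      · omega
      constructor
      · omega
      · omega
    have hSne : ∀ a ∈ S, a ≠ 0 := by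
      intro a haS
      have : a ∈ M := by rw [hS]; exact Multiset.mem_add.mpr (Or.inl haS)
      rw [hMdef] at this
      exact (Multiset.mem_filter.mp this).2
    set P0 := (S.map (fun a => X - Polynomial.C a)).prod with hP0def
    have hP0monic : P0.Monic :=
      Polynomial.monic_multiset_prod_of_monic _ _ (fun a _ => Polynomial.monic_X_sub_C a)
    have hP0deg : P0.natDegree = ν := by
      rw [hP0def, Polynomial.natDegree_multiset_prod_X_sub_C_eq_card]
    set lc := f.leadingCoeff with hlcdef
    have hlcne : lc ≠ 0 := Polynomial.leadingCoeff_ne_zero.mpr hfne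
    set β := (S.map (fun a => -((starRingEnd ℂ) a))).prod with hβdef
    have hβne : β ≠ 0 := by
      rw [hβdef]
      refine Multiset.prod_ne_zero ?_
      rw [Multiset.mem_map]
      rintro ⟨a, haS, ha⟩
      exact hSne a haS (by simpa using ha.symm)
    set κ := lc * β⁻¹ with hκdef
    have hκne : κ ≠ 0 := mul_ne_zero hlcne (inv_ne_zero hβne)
    -- main pointwise identity
    have hmain : ∀ z : ℂ, z ≠ 0 → ((z^D)⁻¹ : ℂ) * f.eval z
        = κ * (P0.eval z * (P0.map (starRingEnd ℂ)).eval z⁻¹) := by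
      intro z hz
      have hP0z : P0.eval z = (S.map (fun a => z - a)).prod := by
        rw [hP0def, Polynomial.eval_multiset_prod, Multiset.map_map]
        congr 1
        apply Multiset.map_congr rfl
        intro a _
        simp
      have hPc : (P0.map (starRingEnd ℂ)).eval z⁻¹
          = (S.map (fun a => z⁻¹ - (starRingEnd ℂ) a)).prod := by
        rw [hP0def, Polynomial.map_multiset_prod, Multiset.map_map,
          Polynomial.eval_multiset_prod, Multiset.map_map]
        congr 1
        apply Multiset.map_congr rfl
        intro a _
        simp
      have hstep : (S.map (fun a => z⁻¹ - (starRingEnd ℂ) a)).prod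
          = (z⁻¹)^ν * β * (S.map (fun a => z - ((starRingEnd ℂ) a)⁻¹)).prod := by
        have hcongr : ∀ a ∈ S, z⁻¹ - (starRingEnd ℂ) a
            = z⁻¹ * -((starRingEnd ℂ) a) * (z - ((starRingEnd ℂ) a)⁻¹) := by
          intro a haS
          have hca : (starRingEnd ℂ) a ≠ 0 := by simpa using hSne a haS
          field_simp
          ring
        rw [Multiset.map_congr rfl hcongr, Multiset.prod_map_mul, Multiset.prod_map_mul]
        rw [Multiset.map_const', Multiset.prod_replicate, ← hβdef, ← hν]
      have hfz : f.eval z = lc * (z ^ k * ((S.map (fun a => z - a)).prod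
          * (S.map (fun a => z - ((starRingEnd ℂ) a)⁻¹)).prod)) := by
        conv_lhs => rw [hfeq]
        rw [Polynomial.eval_mul, Polynomial.eval_C, Polynomial.eval_multiset_prod,
          Multiset.map_map]
        rw [hdecomp, hS]
        rw [Multiset.map_add, Multiset.map_add, Multiset.prod_add, Multiset.prod_add]
        rw [Multiset.map_replicate, Multiset.prod_replicate, Multiset.map_map]
        simp only [Function.comp_apply, Polynomial.eval_sub, Polynomial.eval_X,
          Polynomial.eval_C, sub_zero, hιdef]
      have hzz : ((z^D)⁻¹ : ℂ) * z^k = (z⁻¹)^ν := by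
        have h1 : z^k * z^ν = z^D := by
          rw [← pow_add]; congr 1; omega
        rw [inv_pow]
        rw [inv_mul_eq_iff_eq_mul₀ (pow_ne_zero _ hz), ← h1]
        field_simp
      rw [hfz, hP0z, hPc, hstep, hκdef]
      calc ((z^D)⁻¹ : ℂ) * (lc * (z ^ k * ((S.map (fun a => z - a)).prod
              * (S.map (fun a => z - ((starRingEnd ℂ) a)⁻¹)).prod)))
          = (((z^D)⁻¹ : ℂ) * z^k) * (lc * ((S.map (fun a => z - a)).prod
              * (S.map (fun a => z - ((starRingEnd ℂ) a)⁻¹)).prod)) := by ring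
        _ = (z⁻¹)^ν * (lc * ((S.map (fun a => z - a)).prod
              * (S.map (fun a => z - ((starRingEnd ℂ) a)⁻¹)).prod)) := by rw [hzz]
        _ = lc * β⁻¹ * ((S.map (fun a => z - a)).prod
              * ((z⁻¹)^ν * β * (S.map (fun a => z - ((starRingEnd ℂ) a)⁻¹)).prod)) := by
            field_simp
    -- positivity of κ
    obtain ⟨z0, hz0c, hz0r⟩ : ∃ z0 : ℂ, ‖z0‖ = 1 ∧ f.eval z0 ≠ 0 := by
      have hfin : Set.Finite {x : ℂ | f.IsRoot x} := Polynomial.finite_setOf_isRoot hfne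
      obtain ⟨z0, hz0⟩ := (fr_circle_infinite.diff hfin).nonempty
      exact ⟨z0, hz0.1, hz0.2⟩
    have hz00 : z0 ≠ 0 := fun h => by simp [h] at hz0c
    have hP0z0 : P0.eval z0 ≠ 0 := by
      intro h
      rw [hP0def, Polynomial.eval_multiset_prod, Multiset.map_map,
        Multiset.prod_eq_zero_iff, Multiset.mem_map] at h
      obtain ⟨a, haS, ha0⟩ := h
      simp only [Function.comp_apply, Polynomial.eval_sub, Polynomial.eval_X,
        Polynomial.eval_C] at ha0
      have haM : a ∈ M := by rw [hS]; exact Multiset.mem_add.mpr (Or.inl haS)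
      have haroot : a ∈ f.roots := by rw [hMdef] at haM; exact Multiset.mem_filter.mp haM |>.1
      have hroot : f.IsRoot a := (Polynomial.mem_roots'.mp haroot).2
      apply hz0r
      have hza : z0 = a := sub_eq_zero.mp ha0
      rw [hza]
      exact hroot
    have hLz0 := hmain z0 hz00
    have hcc : (starRingEnd ℂ) (z0⁻¹) = z0 := by
      rw [map_inv₀, fr_conj_circle hz0c, inv_inv]
    have hconj : (P0.map (starRingEnd ℂ)).eval z0⁻¹ = (starRingEnd ℂ) (P0.eval z0) := by
      rw [fr_eval_conj, hcc]
    rw [hconj, Complex.mul_conj] at hLz0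
    set t := Complex.normSq (P0.eval z0) with htdef
    have ht0 : 0 < t := Complex.normSq_pos.mpr hP0z0
    have hLim := (hQp z0 hz0c).1
    have hLre := (hQp z0 hz0c).2
    rw [hLz0] at hLim hLre
    have hκim : κ.im = 0 := by
      have h1 : (κ * ((t:ℝ):ℂ)).im = κ.im * t := by simp [Complex.mul_im]
      rw [h1] at hLim
      rcases mul_eq_zero.mp hLim with h | h
      · exact h
      · exact absurd h (ne_of_gt ht0)
    have hκre : 0 < κ.re := by
      have h1 : (κ * ((t:ℝ):ℂ)).re = κ.re * t := by simp [Complex.mul_re]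
      rw [h1] at hLre
      have h3 : κ.re ≠ 0 := fun h => hκne (Complex.ext h hκim)
      rcases lt_trichotomy κ.re 0 with h | h | h
      · nlinarith
      · exact absurd h h3
      · exact h
    set c : ℝ := Real.sqrt κ.re with hcdef
    have hc2 : (c:ℂ) * (c:ℂ) = κ := by
      have h1 : (c:ℝ) * c = κ.re := Real.mul_self_sqrt (le_of_lt hκre)
      have hκeq : κ = ((κ.re : ℝ) : ℂ) := by
        refine Complex.ext ?_ ?_
        · simp
        · simp [hκim]
      rw [hκeq]
      norm_cast
    refine ⟨fun i => (c:ℂ) * P0.coeff i, fun z hz => ?_⟩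
    have hP0degD : P0.natDegree < D + 1 := by rw [hP0deg]; omega
    have hsum1 : ∑ i ∈ Finset.range (D+1), ((c:ℂ) * P0.coeff i) * z ^ i
        = (c:ℂ) * P0.eval z := by
      rw [Polynomial.eval_eq_sum_range' hP0degD, Finset.mul_sum]
      exact Finset.sum_congr rfl (fun i _ => by ring)
    have hsum2 : ∑ i ∈ Finset.range (D+1), ((c:ℂ) * P0.coeff i) * (((starRingEnd ℂ) z)⁻¹) ^ i
        = (c:ℂ) * P0.eval (((starRingEnd ℂ) z)⁻¹) := by
      rw [Polynomial.eval_eq_sum_range' hP0degD, Finset.mul_sum]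
      exact Finset.sum_congr rfl (fun i _ => by ring)
    rw [fr_laurent D q hz, ← hfdef, hmain z hz, hsum1, hsum2]
    rw [map_mul, Complex.conj_ofReal]
    have hconj2 : (starRingEnd ℂ) (P0.eval (((starRingEnd ℂ) z)⁻¹))
        = (P0.map (starRingEnd ℂ)).eval z⁻¹ := by
      rw [fr_eval_conj]
      congr 1
      rw [map_inv₀]
    rw [hconj2, ← hc2]
    ring
  · rintro ⟨p, hp⟩ z hz
    have hz0 : z ≠ 0 := fun h => by simp [h] at hz
    have hzc : ((starRingEnd ℂ) z)⁻¹ = z := by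
      rw [fr_conj_circle hz, inv_inv]
    rw [hp z hz0, hzc]
    rw [Complex.mul_conj]
    constructor
    · simp
    · simp
      exact Complex.normSq_nonneg _
end

section
/- Let Q(z) = \sum_{i=-(N-1)}^{N-1} q_i z^i be a Laurent polynomial of degree N-1. Then Q is nonnegative on the unit circle if and only if there exists an N x N Hermitian positive semidefinite matrix Q such that q_i = Tr_i(Q) for all i, where Tr_i denotes the sum of entries along the i-th superdiagonal (or |i|-th subdiagonal for i < 0). -/
open ComplexOrder

/-- `diagTrace i X` is the sum of the entries of `X` along the `i`-th
superdiagonal (subdiagonal for `i < 0`). -/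
noncomputable def diagTrace {N : ℕ} (i : ℤ) (X : Matrix (Fin N) (Fin N) ℂ) : ℂ :=
  ∑ j : Fin N, ∑ k : Fin N, if (k : ℤ) - (j : ℤ) = i then X j k else 0

open Polynomial Complex Filter Matrix


lemma circle_infinite : {z : ℂ | ‖z‖ = 1}.Infinite := by
  have h1 : Set.InjOn (fun θ : ℝ => Complex.exp (θ * Complex.I)) (Set.Ioo 0 1) := by
    intro a ha b hb hab
    rw [Complex.exp_eq_exp_iff_exists_int] at hab
    obtain ⟨n, hn⟩ := hab
    have h2 : (a : ℂ) = b + n * (2 * Real.pi) := by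
      have hI : (Complex.I : ℂ) ≠ 0 := Complex.I_ne_zero
      apply mul_right_cancel₀ hI
      rw [hn]; ring
    have h3 : a = b + n * (2 * Real.pi) := by exact_mod_cast h2
    have hpi := Real.pi_gt_three
    rcases lt_trichotomy n 0 with h | h | h
    · exfalso
      have : (n : ℝ) ≤ -1 := by exact_mod_cast (by omega : n ≤ -1)
      nlinarith [ha.1, ha.2, hb.1, hb.2]
    · simp [h] at h3; linarith [h3]
    · exfalso
      have : (1 : ℝ) ≤ (n : ℝ) := by exact_mod_cast h
      nlinarith [ha.1, ha.2, hb.1, hb.2]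
  have h2 : (Set.Ioo (0:ℝ) 1).Infinite := Set.Ioo_infinite zero_lt_one
  apply (h2.image h1).mono
  rintro z ⟨θ, _, rfl⟩
  simp [Complex.norm_exp]

lemma poly_eq_of_circle {P Q : Polynomial ℂ}
    (h : ∀ z : ℂ, ‖z‖ = 1 → P.eval z = Q.eval z) : P = Q := by
  have h0 : P - Q = 0 := by
    apply Polynomial.eq_zero_of_infinite_isRoot
    apply circle_infinite.mono
    intro z hz
    simp [Polynomial.IsRoot, h z hz]
  have := sub_eq_zero.mp h0
  exact this

noncomputable def pconj (P : Polynomial ℂ) (n : ℕ) : Polynomial ℂ :=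
  ∑ j ∈ Finset.range (n+1), Polynomial.C ((starRingEnd ℂ) (P.coeff (n - j))) * Polynomial.X ^ j

lemma self_inversive {P : Polynomial ℂ} {n : ℕ} (hdeg : P.natDegree ≤ n)
    (h : ∀ z : ℂ, ‖z‖ = 1 → z ^ n * (starRingEnd ℂ) (P.eval z) = P.eval z) :
    pconj P n = P := by
  apply poly_eq_of_circle
  intro z hz
  have hz0 : z ≠ 0 := by intro h0; rw [h0] at hz; simp at hz
  have hev : P.eval z = ∑ j ∈ Finset.range (n+1), P.coeff j * z ^ j :=
    Polynomial.eval_eq_sum_range' (lt_of_le_of_lt hdeg (Nat.lt_succ_self n)) z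
  have heval : (pconj P n).eval z
      = ∑ j ∈ Finset.range (n+1), (starRingEnd ℂ) (P.coeff (n - j)) * z ^ j := by
    simp [pconj, Polynomial.eval_finset_sum]
  rw [heval, ← h z hz, hev]
  rw [← Finset.sum_range_reflect (fun j => (starRingEnd ℂ) (P.coeff (n - j)) * z ^ j) (n+1)]
  rw [_root_.map_sum, Finset.mul_sum]
  apply Finset.sum_congr rfl
  intro j hj
  rw [Finset.mem_range] at hj
  have hj' : j ≤ n := Nat.lt_succ_iff.mp hj
  have h1 : n + 1 - 1 - j = n - j := by omega
  have h2 : n - (n - j) = j := by omega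
  rw [h1, h2, _root_.map_mul, _root_.map_pow]
  have hcz : (starRingEnd ℂ) z = z⁻¹ := (Complex.inv_eq_conj (by simpa using hz)).symm
  rw [hcz, pow_sub₀ z hz0 hj', inv_pow]
  ring

lemma pconj_coeff (P : Polynomial ℂ) (n : ℕ) (k : ℕ) (hk : k ≤ n) :
    (pconj P n).coeff k = (starRingEnd ℂ) (P.coeff (n - k)) := by
  rw [pconj, Polynomial.finset_sum_coeff]
  simp only [Polynomial.coeff_C_mul, Polynomial.coeff_X_pow, mul_ite, mul_one, mul_zero]
  rw [Finset.sum_ite_eq (Finset.range (n+1)) k (fun j => (starRingEnd ℂ) (P.coeff (n - j)))]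
  simp [Nat.lt_succ_iff, hk]

lemma coeff_symm {P : Polynomial ℂ} {n : ℕ} (hdeg : P.natDegree ≤ n)
    (h : ∀ z : ℂ, ‖z‖ = 1 → z ^ n * (starRingEnd ℂ) (P.eval z) = P.eval z)
    {j : ℕ} (hj : j ≤ n) : P.coeff j = (starRingEnd ℂ) (P.coeff (n - j)) := by
  conv_lhs => rw [← self_inversive hdeg h]
  exact pconj_coeff P n j hj

lemma root_inv {P : Polynomial ℂ} {n : ℕ} (hdeg : P.natDegree ≤ n)
    (h : ∀ z : ℂ, ‖z‖ = 1 → z ^ n * (starRingEnd ℂ) (P.eval z) = P.eval z)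
    {r : ℂ} (hr : r ≠ 0) (hroot : P.eval r = 0) : P.eval (((starRingEnd ℂ) r)⁻¹) = 0 := by
  have hps := self_inversive hdeg h
  have hev : ∀ w : ℂ, P.eval w = ∑ j ∈ Finset.range (n+1), P.coeff j * w ^ j := fun w =>
    Polynomial.eval_eq_sum_range' (lt_of_le_of_lt hdeg (Nat.lt_succ_self n)) w
  rw [← hps]
  have : (pconj P n).eval (((starRingEnd ℂ) r)⁻¹)
      = ∑ j ∈ Finset.range (n+1), (starRingEnd ℂ) (P.coeff (n - j)) * (((starRingEnd ℂ) r)⁻¹) ^ j := by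
    simp [pconj, Polynomial.eval_finset_sum]
  rw [this]
  have : ∑ j ∈ Finset.range (n+1), (starRingEnd ℂ) (P.coeff (n - j)) * (((starRingEnd ℂ) r)⁻¹) ^ j
      = (starRingEnd ℂ) (∑ j ∈ Finset.range (n+1), (P.coeff (n - j)) * (r⁻¹) ^ j) := by
    rw [_root_.map_sum]; apply Finset.sum_congr rfl; intro j _
    simp [_root_.map_mul, _root_.map_pow, map_inv₀]
  rw [this]
  have hz : ∑ j ∈ Finset.range (n+1), (P.coeff (n - j)) * (r⁻¹) ^ j = 0 := by
    have : ∑ j ∈ Finset.range (n+1), (P.coeff (n - j)) * (r⁻¹) ^ j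
        = r⁻¹ ^ n * ∑ j ∈ Finset.range (n+1), (P.coeff j) * r ^ j := by
      rw [Finset.mul_sum]
      rw [← Finset.sum_range_reflect (fun j => (P.coeff (n - j)) * (r⁻¹) ^ j) (n+1)]
      apply Finset.sum_congr rfl
      intro j hj
      rw [Finset.mem_range, Nat.lt_succ_iff] at hj
      have h1 : n + 1 - 1 - j = n - j := by omega
      have h2 : n - (n - j) = j := by omega
      rw [h1, h2, inv_pow, pow_sub₀ r hr hj]
      field_simp
      rw [one_div, inv_pow, mul_assoc, mul_inv_cancel₀ (pow_ne_zero n hr), mul_one]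
    rw [this, ← hev, hroot, mul_zero]
  rw [hz, _root_.map_zero]

lemma circle_limit {Q : Polynomial ℂ} {m : ℕ} {r : ℂ} (hr : ‖r‖ = 1)
    (h : ∀ z : ℂ, ‖z‖ = 1 → z ≠ r → ∃ s : ℝ, 0 ≤ s ∧ Q.eval z = z ^ m * s) :
    ∃ s : ℝ, 0 ≤ s ∧ Q.eval r = r ^ m * s := by
  have hr0 : r ≠ 0 := by intro h0; rw [h0] at hr; simp at hr
  set F : ℂ → ℂ := fun z => Q.eval z * (z ^ m)⁻¹ with hF
  set zn : ℕ → ℂ := fun n => r * Complex.exp ((1 / (n+1) : ℝ) * Complex.I) with hzn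
  have habs : ∀ n, ‖(zn n)‖ = 1 := by
    intro n; rw [hzn]; simp [_root_.map_mul, hr, Complex.norm_exp]
  have hne : ∀ n, zn n ≠ r := by
    intro n heq
    have h1 : Complex.exp ((1 / (n+1) : ℝ) * Complex.I) = 1 :=
      mul_left_cancel₀ hr0 (heq.trans (mul_one r).symm)
    rw [Complex.exp_eq_one_iff] at h1
    obtain ⟨k, hk⟩ := h1
    have hI : (Complex.I : ℂ) ≠ 0 := Complex.I_ne_zero
    have h2 : ((1 / (n+1) : ℝ) : ℂ) = k * (2 * Real.pi) := by
      apply mul_right_cancel₀ hI; rw [hk]; ring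
    have h3 : (1 / (n+1) : ℝ) = k * (2 * Real.pi) := by exact_mod_cast h2
    have hpi := Real.pi_gt_three
    have hn1 : (0:ℝ) < 1 / (n+1) := by positivity
    have hn2 : (1 / (n+1) : ℝ) ≤ 1 := by
      rw [div_le_one (by positivity)]; simp
    rcases lt_trichotomy k 0 with hc | hc | hc
    · have : (k:ℝ) ≤ -1 := by exact_mod_cast (by omega : k ≤ -1)
      nlinarith
    · simp [hc] at h3; linarith
    · have : (1:ℝ) ≤ k := by exact_mod_cast hc
      nlinarith
  have hlim : Tendsto zn atTop (nhds r) := by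
    have h1 : Tendsto (fun n : ℕ => (1 / (n+1) : ℝ)) atTop (nhds 0) :=
      tendsto_one_div_add_atTop_nhds_zero_nat
    have h2 : Continuous (fun t : ℝ => r * Complex.exp (t * Complex.I)) := by
      continuity
    have := (h2.continuousAt (x := 0)).tendsto.comp h1
    simpa [hzn, Function.comp_def, one_div] using this
  have hFcont : ContinuousAt F r := by
    apply ContinuousAt.mul
    · exact (Polynomial.continuous_aeval Q).continuousAt
    · exact ((continuous_pow m).continuousAt).inv₀ (pow_ne_zero m hr0)
  have hFlim : Tendsto (F ∘ zn) atTop (nhds (F r)) := hFcont.tendsto.comp hlim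
  have hK : IsClosed {w : ℂ | w.im = 0 ∧ 0 ≤ w.re} := by
    apply IsClosed.inter
    · exact isClosed_eq Complex.continuous_im continuous_const
    · exact isClosed_le continuous_const Complex.continuous_re
  have hmem : F r ∈ {w : ℂ | w.im = 0 ∧ 0 ≤ w.re} := by
    apply hK.mem_of_tendsto hFlim
    apply Eventually.of_forall
    intro n
    obtain ⟨s, hs0, hs⟩ := h (zn n) (habs n) (hne n)
    have hzn0 : zn n ≠ 0 := by
      intro h0; have := habs n; rw [h0] at this; simp at this
    have hFv : F (zn n) = (s : ℂ) := by
      rw [hF]; simp only; rw [hs]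
      field_simp
    simp only [Function.comp_apply, hFv, Set.mem_setOf_eq]
    simp [hs0]
  refine ⟨(F r).re, hmem.2, ?_⟩
  have : F r = ((F r).re : ℂ) := by
    apply Complex.ext <;> simp [hmem.1]
  have hQr : Q.eval r = r ^ m * F r := by
    rw [hF]; field_simp
  rw [hQr, ← this]

lemma mult_two {P : Polynomial ℂ} {m : ℕ} (hP : P ≠ 0)
    (hpos : ∀ z : ℂ, ‖z‖ = 1 → ∃ s : ℝ, 0 ≤ s ∧ P.eval z = z ^ m * s)
    {r : ℂ} (hr : ‖r‖ = 1) (hroot : P.eval r = 0) :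
    (Polynomial.X - Polynomial.C r)^2 ∣ P := by
  have hr0 : r ≠ 0 := by intro h0; rw [h0] at hr; simp at hr
  set k := Polynomial.rootMultiplicity r P with hk
  have hk1 : 1 ≤ k := (Polynomial.rootMultiplicity_pos hP).mpr hroot
  by_cases hk2 : 2 ≤ k
  · exact dvd_trans (pow_dvd_pow _ hk2) (Polynomial.pow_rootMultiplicity_dvd P r)
  exfalso
  have hkeq : k = 1 := by omega
  set g := P /ₘ (Polynomial.X - Polynomial.C r) ^ k with hg
  have hgr : g.eval r ≠ 0 := Polynomial.eval_divByMonic_pow_rootMultiplicity_ne_zero r hP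
  have hPg : P = (Polynomial.X - Polynomial.C r) * g := by
    conv_lhs => rw [← Polynomial.pow_mul_divByMonic_rootMultiplicity_eq P r]
    rw [← hk, ← hg, hkeq, pow_one]
  -- the curve
  set θ₀ := r.arg with hθ₀
  have hexp : Complex.exp (θ₀ * Complex.I) = r := by
    have := Complex.norm_mul_exp_arg_mul_I r
    rw [hr] at this; simpa using this
  set e : ℝ → ℂ := fun θ => Complex.exp (θ * Complex.I) with he
  have habse : ∀ θ, ‖(e θ)‖ = 1 := by
    intro θ; simp [he, Complex.norm_exp]
  have hde : HasDerivAt e (r * Complex.I) θ₀ := by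
    have h1 : HasDerivAt (fun θ : ℝ => (θ:ℂ) * Complex.I) Complex.I θ₀ := by
      simpa using (Complex.ofRealCLM.hasDerivAt (x := θ₀)).mul_const Complex.I
    have := h1.cexp
    simpa [he, hexp] using this
  have hslope : Tendsto (slope e θ₀) (nhdsWithin θ₀ {θ₀}ᶜ) (nhds (r * Complex.I)) :=
    hasDerivAt_iff_tendsto_slope.mp hde
  -- the continuous factor
  set G : ℝ → ℂ := fun θ => g.eval (e θ) * ((e θ) ^ m)⁻¹ with hG
  have hGcont : ContinuousAt G θ₀ := by
    have hec : Continuous e := by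
      apply Complex.continuous_exp.comp
      exact (Complex.continuous_ofReal.mul continuous_const)
    apply ContinuousAt.mul
    · exact ((Polynomial.continuous_aeval g).comp hec).continuousAt
    · apply ContinuousAt.inv₀
      · exact ((continuous_pow m).comp hec).continuousAt
      · have : e θ₀ = r := hexp
        rw [this]
        exact pow_ne_zero m hr0
  set L := (r * Complex.I) * G θ₀ with hL
  have hL0 : L ≠ 0 := by
    have hGθ : G θ₀ = g.eval r * (r ^ m)⁻¹ := by rw [hG]; simp [he, hexp]
    rw [hL, hGθ]
    apply mul_ne_zero (mul_ne_zero hr0 Complex.I_ne_zero)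
    exact mul_ne_zero hgr (inv_ne_zero (pow_ne_zero m hr0))
  set Φ : ℝ → ℂ := fun θ => slope e θ₀ θ * G θ with hΦ
  have hΦlim : Tendsto Φ (nhdsWithin θ₀ {θ₀}ᶜ) (nhds L) :=
    hslope.mul (hGcont.tendsto.mono_left nhdsWithin_le_nhds)
  -- identification of Φ with s/(θ-θ₀)
  have hΦval : ∀ θ : ℝ, θ ≠ θ₀ → ∃ s : ℝ, 0 ≤ s ∧ Φ θ = ((s / (θ - θ₀) : ℝ) : ℂ) := by
    intro θ hθ
    obtain ⟨s, hs0, hs⟩ := hpos (e θ) (habse θ)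
    refine ⟨s, hs0, ?_⟩
    have hem : (e θ) ^ m ≠ 0 := pow_ne_zero m (Complex.exp_ne_zero _)
    have h1 : Φ θ = ((θ - θ₀ : ℝ) : ℂ)⁻¹ * (P.eval (e θ) * ((e θ) ^ m)⁻¹) := by
      rw [hΦ]
      simp only
      rw [slope_def_module, hPg]
      have : e θ₀ = r := hexp
      rw [this]
      simp only [Polynomial.eval_mul, Polynomial.eval_sub, Polynomial.eval_X, Polynomial.eval_C]
      rw [hG]
      simp only
      push_cast
      field_simp
      rw [Complex.real_smul]; push_cast; ring
    rw [h1, hs]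
    have h2 : ((e θ) ^ m * s) * ((e θ) ^ m)⁻¹ = (s : ℂ) := by field_simp
    rw [h2, Complex.ofReal_div]
    rw [div_eq_inv_mul]
  -- limits from the right and from the left
  have hsub1 : Set.Ioi θ₀ ⊆ {θ₀}ᶜ := fun x hx => ne_of_gt hx
  have hsub2 : Set.Iio θ₀ ⊆ {θ₀}ᶜ := fun x hx => ne_of_lt hx
  have hclosed1 : IsClosed {w : ℂ | w.im = 0 ∧ 0 ≤ w.re} :=
    (isClosed_eq Complex.continuous_im continuous_const).inter
      (isClosed_le continuous_const Complex.continuous_re)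
  have hclosed2 : IsClosed {w : ℂ | w.im = 0 ∧ w.re ≤ 0} :=
    (isClosed_eq Complex.continuous_im continuous_const).inter
      (isClosed_le Complex.continuous_re continuous_const)
  have hup : L ∈ {w : ℂ | w.im = 0 ∧ 0 ≤ w.re} := by
    refine hclosed1.mem_of_tendsto
      (hΦlim.mono_left (nhdsWithin_mono θ₀ hsub1)) ?_
    apply Eventually.mono self_mem_nhdsWithin
    intro θ hθ
    have hθne : θ ≠ θ₀ := ne_of_gt hθ
    obtain ⟨s, hs0, hsv⟩ := hΦval θ hθne
    have hpos' : (0:ℝ) ≤ s / (θ - θ₀) := div_nonneg hs0 (le_of_lt (sub_pos.mpr hθ))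
    have him : (Φ θ).im = 0 := by rw [hsv]; exact Complex.ofReal_im _
    have hre : (Φ θ).re = s / (θ - θ₀) := by rw [hsv]; exact Complex.ofReal_re _
    exact ⟨him, by rw [hre]; exact hpos'⟩
  have hdown : L ∈ {w : ℂ | w.im = 0 ∧ w.re ≤ 0} := by
    refine hclosed2.mem_of_tendsto
      (hΦlim.mono_left (nhdsWithin_mono θ₀ hsub2)) ?_
    apply Eventually.mono self_mem_nhdsWithin
    intro θ hθ
    have hθne : θ ≠ θ₀ := ne_of_lt hθ
    obtain ⟨s, hs0, hsv⟩ := hΦval θ hθne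
    have hneg' : s / (θ - θ₀) ≤ 0 :=
      div_nonpos_of_nonneg_of_nonpos hs0 (le_of_lt (sub_neg.mpr hθ))
    have him : (Φ θ).im = 0 := by rw [hsv]; exact Complex.ofReal_im _
    have hre : (Φ θ).re = s / (θ - θ₀) := by rw [hsv]; exact Complex.ofReal_re _
    exact ⟨him, by rw [hre]; exact hneg'⟩
  apply hL0
  apply Complex.ext
  · exact le_antisymm hdown.2 hup.2
  · simpa using hup.1

lemma fejer_riesz : ∀ m : ℕ, ∀ P : Polynomial ℂ, P.natDegree ≤ 2*m →
    (∀ z : ℂ, ‖z‖ = 1 → ∃ s : ℝ, 0 ≤ s ∧ P.eval z = z ^ m * s) →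
    ∃ p : Polynomial ℂ, p.natDegree ≤ m ∧
      ∀ z : ℂ, ‖z‖ = 1 →
        P.eval z = z ^ m * (p.eval z * (starRingEnd ℂ) (p.eval z)) := by
  intro m
  induction m with
  | zero =>
    intro P hdeg hpos
    have hPC : P = Polynomial.C (P.coeff 0) := Polynomial.eq_C_of_natDegree_le_zero (by omega)
    obtain ⟨s, hs0, hs⟩ := hpos 1 (by simp)
    rw [hPC] at hs ⊢
    simp only [Polynomial.eval_C, one_pow, one_mul] at hs
    refine ⟨Polynomial.C ((Real.sqrt s : ℝ) : ℂ), by simp, ?_⟩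
    intro z hz
    simp only [Polynomial.eval_C, pow_zero, one_mul, hs]
    rw [Complex.conj_ofReal, ← Complex.ofReal_mul, Real.mul_self_sqrt hs0]
  | succ m ih =>
    intro P hdeg hpos
    by_cases hP0 : P = 0
    · exact ⟨0, by simp, by intro z hz; simp [hP0]⟩
    have hsyml : ∀ z : ℂ, ‖z‖ = 1 →
        z ^ (2*(m+1)) * (starRingEnd ℂ) (P.eval z) = P.eval z := by
      intro z hz
      have hz0 : z ≠ 0 := by intro h0; rw [h0] at hz; simp at hz
      obtain ⟨s, _, hs⟩ := hpos z hz
      have hcz : (starRingEnd ℂ) z = z⁻¹ := (Complex.inv_eq_conj (by simpa using hz)).symm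
      rw [hs, _root_.map_mul, _root_.map_pow, hcz, Complex.conj_ofReal]
      rw [show 2*(m+1) = (m+1)+(m+1) by ring, pow_add, inv_pow]
      field_simp
    by_cases hc0 : P.coeff 0 = 0
    · -- strip a factor of X
      have htop : P.coeff (2*(m+1)) = 0 := by
        have := coeff_symm hdeg hsyml (le_refl (2*(m+1)))
        rw [Nat.sub_self] at this
        rw [this, hc0, _root_.map_zero]
      have hdeg' : P.natDegree ≤ 2*m + 1 := by
        rcases Nat.lt_or_ge P.natDegree (2*(m+1)) with h | h
        · omega
        · exfalso
          have hEq : P.natDegree = 2*(m+1) := le_antisymm hdeg h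
          have := Polynomial.leadingCoeff_ne_zero.mpr hP0
          rw [Polynomial.leadingCoeff, hEq] at this
          exact this htop
      have hX : Polynomial.X * P.divX = P := by
        have := Polynomial.X_mul_divX_add P
        rw [hc0, _root_.map_zero, add_zero] at this
        exact this
      have hdegdiv : P.divX.natDegree ≤ 2*m := by
        have := Polynomial.natDegree_divX_eq_natDegree_tsub_one (p := P)
        omega
      have hposdiv : ∀ z : ℂ, ‖z‖ = 1 → ∃ s : ℝ, 0 ≤ s ∧ P.divX.eval z = z ^ m * s := by
        intro z hz
        obtain ⟨s, hs0, hs⟩ := hpos z hz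
        have hz0 : z ≠ 0 := by intro h0; rw [h0] at hz; simp at hz
        refine ⟨s, hs0, ?_⟩
        apply mul_left_cancel₀ hz0
        have h2 : z * P.divX.eval z = P.eval z := by
          conv_rhs => rw [← hX]
          simp [Polynomial.eval_mul]
        rw [h2, hs, pow_succ]
        ring
      obtain ⟨p, hpdeg, hpev⟩ := ih P.divX hdegdiv hposdiv
      refine ⟨p, le_trans hpdeg (by omega), ?_⟩
      intro z hz
      have hz0 : z ≠ 0 := by intro h0; rw [h0] at hz; simp at hz
      rw [← hX, Polynomial.eval_mul, Polynomial.eval_X, hpev z hz]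
      rw [pow_succ]
      ring
    · -- P has nonzero constant coefficient
      have htop : P.coeff (2*(m+1)) ≠ 0 := by
        have := coeff_symm hdeg hsyml (le_refl (2*(m+1)))
        rw [Nat.sub_self] at this
        rw [this]
        simpa using hc0
      have hndeg : P.natDegree = 2*(m+1) :=
        le_antisymm hdeg (Polynomial.le_natDegree_of_ne_zero htop)
      have hdegpos : 0 < P.degree := by
        rw [Polynomial.degree_eq_natDegree hP0]
        exact_mod_cast (by omega : 0 < P.natDegree)
      obtain ⟨r, hroot⟩ := Complex.exists_root hdegpos
      rw [Polynomial.IsRoot] at hroot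
      have hr0 : r ≠ 0 := by
        intro h0
        rw [h0, ← Polynomial.coeff_zero_eq_eval_zero] at hroot
        exact hc0 hroot
      have hcr0 : (starRingEnd ℂ) r ≠ 0 := by simpa using hr0
      set r' : ℂ := ((starRingEnd ℂ) r)⁻¹ with hr'def
      have hdvd : (Polynomial.X - Polynomial.C r) * (Polynomial.X - Polynomial.C r') ∣ P := by
        by_cases habs1 : ‖r‖ = 1
        · have hrr : r' = r := by
            rw [hr'def]
            apply inv_eq_of_mul_eq_one_right
            rw [mul_comm, Complex.mul_conj]
            norm_cast
            rw [Complex.normSq_eq_norm_sq, habs1]; norm_num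
          rw [hrr, ← sq]
          exact mult_two hP0 hpos habs1 hroot
        · have hroot' : P.eval r' = 0 := root_inv hdeg hsyml hr0 hroot
          have hne : r ≠ r' := by
            intro heq
            apply habs1
            have h1 : r * (starRingEnd ℂ) r = 1 := by
              nth_rewrite 1 [heq]
              rw [hr'def]
              exact inv_mul_cancel₀ hcr0
            rw [Complex.mul_conj] at h1
            have h2 : Complex.normSq r = 1 := by exact_mod_cast h1
            have := Complex.normSq_eq_norm_sq r
            nlinarith [norm_nonneg r]
          have hcop : IsCoprime (Polynomial.X - Polynomial.C r) (Polynomial.X - Polynomial.C r') :=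
            Polynomial.isCoprime_X_sub_C_of_isUnit_sub ((sub_ne_zero_of_ne hne).isUnit)
          exact hcop.mul_dvd (Polynomial.dvd_iff_isRoot.mpr hroot)
            (Polynomial.dvd_iff_isRoot.mpr hroot')
      obtain ⟨Q, hQ⟩ := hdvd
      have hQ0 : Q ≠ 0 := by intro h0; rw [h0, mul_zero] at hQ; exact hP0 hQ
      have hdegQ : Q.natDegree ≤ 2*m := by
        have h1 : ((Polynomial.X - Polynomial.C r) * (Polynomial.X - Polynomial.C r')).natDegree = 2 := by
          rw [Polynomial.natDegree_mul (Polynomial.X_sub_C_ne_zero r) (Polynomial.X_sub_C_ne_zero r')]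
          simp [Polynomial.natDegree_X_sub_C]
        have h2 : P.natDegree = 2 + Q.natDegree := by
          rw [hQ, Polynomial.natDegree_mul (mul_ne_zero (Polynomial.X_sub_C_ne_zero r) (Polynomial.X_sub_C_ne_zero r')) hQ0, h1]
        omega
      set Q' : Polynomial ℂ := Polynomial.C (-(((starRingEnd ℂ) r))⁻¹) * Q with hQ'def
      have hdegQ' : Q'.natDegree ≤ 2*m := by
        calc Q'.natDegree ≤ (Polynomial.C (-(((starRingEnd ℂ) r))⁻¹)).natDegree + Q.natDegree :=
              Polynomial.natDegree_mul_le
        _ ≤ 2*m := by simp [Polynomial.natDegree_C, hdegQ]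
      -- key identity on the circle
      have hkey : ∀ z : ℂ, ‖z‖ = 1 →
          P.eval z = z * ((z - r) * (starRingEnd ℂ) (z - r)) * Q'.eval z := by
        intro z hz
        have hz0 : z ≠ 0 := by intro h0; rw [h0] at hz; simp at hz
        have hcz : (starRingEnd ℂ) z = z⁻¹ := (Complex.inv_eq_conj (by simpa using hz)).symm
        have hfac : (z - r) * (z - r') = z * ((z - r) * (starRingEnd ℂ) (z - r)) * (-(((starRingEnd ℂ) r))⁻¹) := by
          rw [_root_.map_sub, hcz, hr'def]
          field_simp
          ring
        rw [hQ, Polynomial.eval_mul, Polynomial.eval_mul, Polynomial.eval_sub,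
          Polynomial.eval_sub, Polynomial.eval_X, Polynomial.eval_C, Polynomial.eval_C,
          hQ'def, Polynomial.eval_mul, Polynomial.eval_C, hfac]
        ring
      -- positivity hypothesis for Q'
      have hq'ne : ∀ z : ℂ, ‖z‖ = 1 → z ≠ r →
          ∃ s : ℝ, 0 ≤ s ∧ Q'.eval z = z ^ m * s := by
        intro z hz hzr
        obtain ⟨s, hs0, hs⟩ := hpos z hz
        have hz0 : z ≠ 0 := by intro h0; rw [h0] at hz; simp at hz
        have ht : (z - r) * (starRingEnd ℂ) (z - r) = ((Complex.normSq (z - r) : ℝ) : ℂ) :=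
          Complex.mul_conj (z - r)
        have ht0 : Complex.normSq (z - r) ≠ 0 := by
          simpa [Complex.normSq_eq_zero, sub_eq_zero] using hzr
        have htpos : 0 < Complex.normSq (z - r) :=
          lt_of_le_of_ne (Complex.normSq_nonneg _) (Ne.symm ht0)
        refine ⟨s / Complex.normSq (z - r), div_nonneg hs0 (le_of_lt htpos), ?_⟩
        have h1 := hkey z hz
        rw [hs, ht] at h1
        have h2 : ((Complex.normSq (z - r) : ℝ) : ℂ) ≠ 0 := by exact_mod_cast ht0
        apply mul_left_cancel₀ (mul_ne_zero hz0 h2)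
        have h1' : z * ((Complex.normSq (z - r) : ℝ) : ℂ) * Q'.eval z = z ^ (m+1) * (s:ℂ) := by
          rw [← h1]
        rw [show z * ((Complex.normSq (z - r) : ℝ) : ℂ) * Q'.eval z
            = z * ((Complex.normSq (z - r) : ℝ) : ℂ) * Q'.eval z from rfl] at h1'
        calc z * ((Complex.normSq (z - r) : ℝ) : ℂ) * Q'.eval z
            = z ^ (m+1) * (s:ℂ) := h1'
          _ = z * ((Complex.normSq (z - r) : ℝ) : ℂ) * (z ^ m * ((s / Complex.normSq (z - r) : ℝ) : ℂ)) := by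
              push_cast
              field_simp
              ring
      have hq' : ∀ z : ℂ, ‖z‖ = 1 → ∃ s : ℝ, 0 ≤ s ∧ Q'.eval z = z ^ m * s := by
        intro z hz
        by_cases hzr : z = r
        · subst hzr
          exact circle_limit hz hq'ne
        · exact hq'ne z hz hzr
      obtain ⟨p', hp'deg, hp'ev⟩ := ih Q' hdegQ' hq'
      refine ⟨(Polynomial.X - Polynomial.C r) * p', ?_, ?_⟩
      · calc ((Polynomial.X - Polynomial.C r) * p').natDegree
            ≤ (Polynomial.X - Polynomial.C r).natDegree + p'.natDegree := Polynomial.natDegree_mul_le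
          _ ≤ 1 + m := by rw [Polynomial.natDegree_X_sub_C]; omega
          _ = m + 1 := by omega
      · intro z hz
        have h1 := hkey z hz
        rw [hp'ev z hz] at h1
        rw [h1, Polynomial.eval_mul, Polynomial.eval_sub, Polynomial.eval_X, Polynomial.eval_C,
          _root_.map_mul, pow_succ]
        ring

lemma sum_diagTrace {N : ℕ} (M : Matrix (Fin N) (Fin N) ℂ) {z : ℂ}
    (hz : ‖z‖ = 1) :
    ∑ i ∈ Finset.Icc (-(N:ℤ) + 1) ((N:ℤ) - 1), diagTrace i M * z ^ i
      = dotProduct (star (fun k : Fin N => z ^ (k:ℕ)))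
          (M.mulVec (fun k : Fin N => z ^ (k:ℕ))) := by
  have hz0 : z ≠ 0 := by intro h0; rw [h0] at hz; simp at hz
  have hcz : (starRingEnd ℂ) z = z⁻¹ := (Complex.inv_eq_conj (by simpa using hz)).symm
  have lhs_eq : ∑ i ∈ Finset.Icc (-(N:ℤ) + 1) ((N:ℤ) - 1), diagTrace i M * z ^ i
      = ∑ j : Fin N, ∑ k : Fin N, M j k * z ^ ((k:ℤ) - (j:ℤ)) := by
    unfold diagTrace
    simp_rw [Finset.sum_mul, ite_mul, zero_mul]
    rw [Finset.sum_comm]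
    apply Finset.sum_congr rfl; intro j _
    rw [Finset.sum_comm]
    apply Finset.sum_congr rfl; intro k _
    rw [Finset.sum_ite_eq (Finset.Icc (-(N:ℤ)+1) ((N:ℤ)-1)) ((k:ℤ)-(j:ℤ))
      (fun i => M j k * z ^ i)]
    have hj := j.isLt
    have hk := k.isLt
    have hmem : (k:ℤ)-(j:ℤ) ∈ Finset.Icc (-(N:ℤ)+1) ((N:ℤ)-1) := by
      rw [Finset.mem_Icc]; omega
    simp [hmem]
  rw [lhs_eq]
  simp only [dotProduct, Matrix.mulVec, Pi.star_apply, RCLike.star_def]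
  apply Finset.sum_congr rfl; intro j _
  rw [Finset.mul_sum]
  apply Finset.sum_congr rfl; intro k _
  rw [zpow_sub₀ hz0, zpow_natCast, zpow_natCast, _root_.map_pow, hcz, inv_pow]
  field_simp

lemma eval_sumpoly (m : ℕ) (a : ℤ → ℂ) {z : ℂ} (hz0 : z ≠ 0) :
    (∑ i ∈ Finset.Icc (-(m:ℤ)) (m:ℤ), Polynomial.C (a i) * Polynomial.X ^ (i+m).toNat).eval z
      = z ^ m * ∑ i ∈ Finset.Icc (-(m:ℤ)) (m:ℤ), a i * z ^ i := by
  rw [Polynomial.eval_finset_sum, Finset.mul_sum]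
  apply Finset.sum_congr rfl
  intro i hi
  rw [Finset.mem_Icc] at hi
  simp only [Polynomial.eval_mul, Polynomial.eval_C, Polynomial.eval_pow, Polynomial.eval_X]
  rw [← zpow_natCast z (i+m).toNat, Int.toNat_of_nonneg (by omega), zpow_add₀ hz0, zpow_natCast]
  ring

lemma coeff_sumpoly (m : ℕ) (a : ℤ → ℂ) {i₀ : ℤ} (hi₀ : i₀ ∈ Finset.Icc (-(m:ℤ)) (m:ℤ)) :
    (∑ i ∈ Finset.Icc (-(m:ℤ)) (m:ℤ), Polynomial.C (a i) * Polynomial.X ^ (i+m).toNat).coeff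
      ((i₀+m).toNat) = a i₀ := by
  rw [Finset.mem_Icc] at hi₀
  rw [Polynomial.finset_sum_coeff]
  simp only [Polynomial.coeff_C_mul, Polynomial.coeff_X_pow, mul_ite, mul_one, mul_zero]
  rw [Finset.sum_eq_single i₀]
  · simp
  · intro i hi hne
    rw [Finset.mem_Icc] at hi
    have : (i₀+m).toNat ≠ (i+m).toNat := by omega
    simp [this]
  · intro h
    exfalso
    exact h (Finset.mem_Icc.mpr (by omega))

/-- A degree `N-1` Laurent polynomial is nonnegative on the unit circle iff its
coefficients are the diagonal traces of some Hermitian PSD `N × N` matrix. -/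
theorem stmt_7 (N : ℕ) (hN : 0 < N) (q : ℤ → ℂ) :
    (∀ z : ℂ, ‖z‖ = 1 →
      (∑ i ∈ Finset.Icc (-(N:ℤ) + 1) ((N:ℤ) - 1), q i * z ^ i).im = 0 ∧
      0 ≤ (∑ i ∈ Finset.Icc (-(N:ℤ) + 1) ((N:ℤ) - 1), q i * z ^ i).re) ↔
    (∃ M : Matrix (Fin N) (Fin N) ℂ, M.PosSemidef ∧
      ∀ i ∈ Finset.Icc (-(N:ℤ) + 1) ((N:ℤ) - 1), q i = diagTrace i M) := by
  obtain ⟨m, rfl⟩ : ∃ m, N = m + 1 := ⟨N - 1, by omega⟩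
  have hIcc : Finset.Icc (-(↑(m+1):ℤ) + 1) ((↑(m+1):ℤ) - 1) = Finset.Icc (-(m:ℤ)) (m:ℤ) := by
    congr 1 <;> push_cast <;> ring
  constructor
  · -- hard direction
    intro H
    set P : Polynomial ℂ := ∑ i ∈ Finset.Icc (-(m:ℤ)) (m:ℤ),
      Polynomial.C (q i) * Polynomial.X ^ (i + m).toNat with hPdef
    have hdegP : P.natDegree ≤ 2 * m := by
      apply Polynomial.natDegree_sum_le_of_forall_le
      intro i hi
      rw [Finset.mem_Icc] at hi
      calc (Polynomial.C (q i) * Polynomial.X ^ (i+m).toNat).natDegree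
          ≤ (Polynomial.C (q i)).natDegree + (Polynomial.X ^ (i+m).toNat : Polynomial ℂ).natDegree :=
            Polynomial.natDegree_mul_le
        _ ≤ 2*m := by
            rw [Polynomial.natDegree_C, Polynomial.natDegree_X_pow]
            omega
    have hpos : ∀ z : ℂ, ‖z‖ = 1 → ∃ s : ℝ, 0 ≤ s ∧ P.eval z = z ^ m * s := by
      intro z hz
      have hz0 : z ≠ 0 := by intro h0; rw [h0] at hz; simp at hz
      obtain ⟨him, hre⟩ := H z hz
      rw [hIcc] at him hre
      refine ⟨(∑ i ∈ Finset.Icc (-(m:ℤ)) (m:ℤ), q i * z ^ i).re, hre, ?_⟩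
      rw [hPdef, eval_sumpoly m q hz0]
      congr 1
      apply Complex.ext <;> simp [him]
    obtain ⟨p, hpdeg, hpev⟩ := fejer_riesz m P hdegP hpos
    set c : Fin (m+1) → ℂ := fun j => p.coeff j with hcdef
    set A : Matrix (Fin 1) (Fin (m+1)) ℂ := Matrix.of (fun _ k => c k) with hAdef
    refine ⟨Aᴴ * A, Matrix.posSemidef_conjTranspose_mul_self A, ?_⟩
    have hMjk : ∀ j k, (Aᴴ * A) j k = (starRingEnd ℂ) (c j) * c k := by
      intro j k
      rw [Matrix.mul_apply]
      rw [Fin.sum_univ_one]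
      rw [Matrix.conjTranspose_apply]
      rfl
    have hsum : ∀ z : ℂ, ‖z‖ = 1 →
        ∑ i ∈ Finset.Icc (-(m:ℤ)) (m:ℤ), diagTrace i (Aᴴ*A) * z ^ i
          = ∑ i ∈ Finset.Icc (-(m:ℤ)) (m:ℤ), q i * z ^ i := by
      intro z hz
      have hz0 : z ≠ 0 := by intro h0; rw [h0] at hz; simp at hz
      have h1 := sum_diagTrace (Aᴴ*A) hz
      rw [hIcc] at h1
      rw [h1]
      have hpz : p.eval z = ∑ k : Fin (m+1), c k * z ^ (k:ℕ) := by
        rw [Polynomial.eval_eq_sum_range' (lt_of_le_of_lt hpdeg (Nat.lt_succ_self m)) z]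
        rw [← Fin.sum_univ_eq_sum_range (fun k => p.coeff k * z ^ k) (m+1)]
      have hdot : dotProduct (star fun k : Fin (m+1) => z ^ (k:ℕ))
            ((Aᴴ*A).mulVec fun k : Fin (m+1) => z ^ (k:ℕ))
          = (starRingEnd ℂ) (p.eval z) * p.eval z := by
        simp only [dotProduct, Matrix.mulVec, Pi.star_apply, RCLike.star_def, hMjk]
        rw [hpz, _root_.map_sum, Finset.sum_mul_sum]
        simp_rw [Finset.mul_sum]
        apply Finset.sum_congr rfl; intro j _
        apply Finset.sum_congr rfl; intro k _
        rw [_root_.map_mul]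
        ring
      rw [hdot]
      -- now use hpev to identify with the q-sum
      have h2 := hpev z hz
      rw [hPdef, eval_sumpoly m q hz0] at h2
      have h3 := mul_left_cancel₀ (pow_ne_zero m hz0) h2
      rw [h3]; ring
    intro i hi
    rw [hIcc] at hi
    have hD : (∑ i ∈ Finset.Icc (-(m:ℤ)) (m:ℤ),
        Polynomial.C (q i - diagTrace i (Aᴴ*A)) * Polynomial.X ^ (i+m).toNat) = 0 := by
      apply poly_eq_of_circle (Q := 0)
      intro z hz
      have hz0 : z ≠ 0 := by intro h0; rw [h0] at hz; simp at hz
      rw [eval_sumpoly m _ hz0, Polynomial.eval_zero]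
      have hzero : ∑ i ∈ Finset.Icc (-(m:ℤ)) (m:ℤ), (q i - diagTrace i (Aᴴ*A)) * z ^ i = 0 := by
        have hs := hsum z hz
        simp_rw [sub_mul]
        rw [Finset.sum_sub_distrib, hs, sub_self]
      rw [hzero, mul_zero]
    have := coeff_sumpoly m (fun i => q i - diagTrace i (Aᴴ*A)) hi
    rw [hD] at this
    simp only [Polynomial.coeff_zero] at this
    exact sub_eq_zero.mp this.symm
  · rintro ⟨M, hPSD, hq⟩ z hz
    have hrw : ∑ i ∈ Finset.Icc (-(↑(m+1):ℤ) + 1) ((↑(m+1):ℤ) - 1), q i * z ^ i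
        = ∑ i ∈ Finset.Icc (-(↑(m+1):ℤ) + 1) ((↑(m+1):ℤ) - 1), diagTrace i M * z ^ i :=
      Finset.sum_congr rfl (fun i hi => by rw [hq i hi])
    rw [hrw, sum_diagTrace M hz]
    have hposdef := (Matrix.posSemidef_iff_dotProduct_mulVec.mp hPSD).2 (fun k : Fin (m+1) => z ^ (k:ℕ))
    rw [Complex.le_def] at hposdef
    exact ⟨by simpa using hposdef.2.symm, by simpa using hposdef.1⟩
end
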